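/- arXiv:2307.10386 — 6 statements merged into one kernel-verified Lean document; each statement's English description precedes it below -/
import Mathlib

section
/- Let r1, r2 ≥ 0, λ2 ≥ λ1 ≥ 0, θ ∈ ℝ and α ∈ ℝ with |α| ≤ e^{-(r1+r2)}, and let σ_sp = K_bs (π_d(r1,r2) + λ1 φ1 + λ2 φ2) K_bs^T. Then the squeezing of formation of σ_sp satisfies S(σ_sp) ≤ r1 + r2. -/
open Matrix Real ComplexOrder

noncomputable section

/-- The symplectic form on two modes, ordering (x1,p1,x2,p2). -/
def Omega4 : Matrix (Fin 4) (Fin 4) ℝ :=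
  !![0,1,0,0; -1,0,0,0; 0,0,0,1; 0,0,-1,0]

/-- Complexification of a real 4×4 matrix. -/
def cplx (A : Matrix (Fin 4) (Fin 4) ℝ) : Matrix (Fin 4) (Fin 4) ℂ :=
  A.map (fun a => (a : ℂ))

/-- σ is a valid two-mode covariance matrix: real symmetric and σ + iΩ ⪰ 0. -/
def IsCov (σ : Matrix (Fin 4) (Fin 4) ℝ) : Prop :=
  σ.IsSymm ∧ (cplx σ + Complex.I • cplx Omega4).PosSemidef

/-- A pure covariance matrix additionally has determinant 1. -/
def IsPureCov (p : Matrix (Fin 4) (Fin 4) ℝ) : Prop :=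
  IsCov p ∧ p.det = 1

/-- Eigenvalues (roots of the characteristic polynomial) sorted increasingly. -/
def sortedEigs (A : Matrix (Fin 4) (Fin 4) ℝ) : List ℝ :=
  A.charpoly.roots.sort (· ≤ ·)

/-- The (j+1)-th lowest eigenvalue (0-indexed). -/
def eig (j : ℕ) (A : Matrix (Fin 4) (Fin 4) ℝ) : ℝ := (sortedEigs A).getD j 0

/-- Symplectic eigenvalues: absolute values of the eigenvalues of iΩσ. -/
def sympEigs (σ : Matrix (Fin 4) (Fin 4) ℝ) : Multiset ℝ :=
  ((Complex.I • (cplx Omega4 * cplx σ)).charpoly.roots).map (fun z => ‖z‖)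

/-- The smallest symplectic eigenvalue ν₁↑. -/
def nu1 (σ : Matrix (Fin 4) (Fin 4) ℝ) : ℝ :=
  ((sympEigs σ).sort (· ≤ ·)).getD 0 0

/-- Λ = diag(1,1,1,-1), implementing partial transposition. -/
def Lam : Matrix (Fin 4) (Fin 4) ℝ := Matrix.diagonal ![1,1,1,-1]

/-- The partial transpose σ^Γ = ΛσΛ. -/
def ptrans (σ : Matrix (Fin 4) (Fin 4) ℝ) : Matrix (Fin 4) (Fin 4) ℝ := Lam * σ * Lam

/-- The auxiliary function h. -/
def hAux (x : ℝ) : ℝ :=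
  ((1+x)^2/(4*x)) * Real.log ((1+x)^2/(4*x))
    - ((1-x)^2/(4*x)) * Real.log ((1-x)^2/(4*x))

/-- h₀[x] = h[e^{-x}]. -/
def h0Aux (x : ℝ) : ℝ := hAux (Real.exp (-x))

/-- Entanglement of formation of a pure covariance matrix. -/
def EOFpure (p : Matrix (Fin 4) (Fin 4) ℝ) : ℝ :=
  if nu1 (ptrans p) < 1 then hAux (nu1 (ptrans p)) else 0

/-- Entanglement of formation of a mixed covariance matrix. -/
def EOF (σ : Matrix (Fin 4) (Fin 4) ℝ) : ℝ :=
  sInf { e : ℝ | ∃ p, IsPureCov p ∧ (σ - p).PosSemidef ∧ e = EOFpure p }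

/-- Squeezing of formation of a pure covariance matrix:
half-sum of the logarithms of its two largest eigenvalues. -/
def SOFpure (p : Matrix (Fin 4) (Fin 4) ℝ) : ℝ :=
  (1/2) * (Real.log (eig 2 p) + Real.log (eig 3 p))

/-- Squeezing of formation of a mixed covariance matrix. -/
def SOF (σ : Matrix (Fin 4) (Fin 4) ℝ) : ℝ :=
  sInf { s : ℝ | ∃ p, IsPureCov p ∧ (σ - p).PosSemidef ∧ s = SOFpure p }

/-- Symplectic form on four modes (two system + two ancillary modes). -/
def Omega8 : Matrix (Fin 4 ⊕ Fin 4) (Fin 4 ⊕ Fin 4) ℝ :=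
  Matrix.fromBlocks Omega4 0 0 Omega4

/-- A passive transformation on two modes: real orthogonal and symplectic. -/
def IsPassive4 (K : Matrix (Fin 4) (Fin 4) ℝ) : Prop :=
  K * Kᵀ = 1 ∧ K * Omega4 * Kᵀ = Omega4

/-- A passive transformation on four modes: real orthogonal and symplectic. -/
def IsPassive8 (K : Matrix (Fin 4 ⊕ Fin 4) (Fin 4 ⊕ Fin 4) ℝ) : Prop :=
  K * Kᵀ = 1 ∧ K * Omega8 * Kᵀ = Omega8

/-- The entanglement of formation potential: supremum of the EOF of the
leading 4×4 principal submatrix of K(σ ⊕ I₄)Kᵀ over 8×8 passive K. -/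
def EOFP (σ : Matrix (Fin 4) (Fin 4) ℝ) : ℝ :=
  sSup { e : ℝ | ∃ K, IsPassive8 K ∧
    e = EOF ((K * (Matrix.fromBlocks σ 0 0 1) * Kᵀ).toBlocks₁₁) }

/-- The balanced beam splitter. -/
def Kbs : Matrix (Fin 4) (Fin 4) ℝ :=
  (Real.sqrt 2)⁻¹ • !![1,0,1,0; 0,1,0,1; -1,0,1,0; 0,-1,0,1]

/-- The locally squeezed two-mode pure state in diagonal form. -/
def piD (r₁ r₂ : ℝ) : Matrix (Fin 4) (Fin 4) ℝ :=
  Matrix.diagonal ![Real.exp (-(2*r₁)), Real.exp (2*r₁), Real.exp (2*r₂), Real.exp (-(2*r₂))]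

/-- The vector |φ₁⟩. -/
def phi1v (α θ : ℝ) : Fin 4 → ℝ :=
  ![α * Real.cos θ, Real.sin θ, Real.cos θ, α * Real.sin θ]

/-- The vector |φ₂⟩. -/
def phi2v (α θ : ℝ) : Fin 4 → ℝ :=
  ![α * Real.sin θ, -Real.cos θ, Real.sin θ, -(α * Real.cos θ)]

/-- The special class of states σ_sp. -/
def sigmaSp (r₁ r₂ l₁ l₂ α θ : ℝ) : Matrix (Fin 4) (Fin 4) ℝ :=
  Kbs * (piD r₁ r₂ + l₁ • Matrix.vecMulVec (phi1v α θ) (phi1v α θ)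
    + l₂ • Matrix.vecMulVec (phi2v α θ) (phi2v α θ)) * Kbsᵀ

/-- The correlated-noise matrix N_α. -/
def Nmat (α : ℝ) : Matrix (Fin 4) (Fin 4) ℝ :=
  !![α^2,0,α,0; 0,1,0,α; α,0,1,0; 0,α,0,α^2]

/-- The de-cross-correlated state σ_dcc. -/
def sigmaDcc (r₁ r₂ l₂ α : ℝ) : Matrix (Fin 4) (Fin 4) ℝ :=
  Kbs * (piD r₁ r₂ + l₂ • Nmat α) * Kbsᵀ

/-- The two-mode squeezer S₂(r). -/
def S2 (r : ℝ) : Matrix (Fin 4) (Fin 4) ℝ :=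
  Kbs * Matrix.diagonal ![Real.exp r, Real.exp (-r), Real.exp (-r), Real.exp r] * Kbsᵀ

/-- Separability (PPT condition): σ^Γ + iΩ ⪰ 0. -/
def IsSep (σ : Matrix (Fin 4) (Fin 4) ℝ) : Prop :=
  (cplx (ptrans σ) + Complex.I • cplx Omega4).PosSemidef

/-- De-cross-correlated two-mode state with x-block C_q and p-block C_p,
in quadrature ordering (x1,p1,x2,p2). -/
def dccGen (Cq Cp : Matrix (Fin 2) (Fin 2) ℝ) : Matrix (Fin 4) (Fin 4) ℝ :=
  !![Cq 0 0, 0, Cq 0 1, 0;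
     0, Cp 0 0, 0, Cp 0 1;
     Cq 1 0, 0, Cq 1 1, 0;
     0, Cp 1 0, 0, Cp 1 1]

/-- De-cross-correlated pure state with x-block C_q and p-block C_q⁻¹. -/
def dccM (Cq : Matrix (Fin 2) (Fin 2) ℝ) : Matrix (Fin 4) (Fin 4) ℝ :=
  dccGen Cq Cq⁻¹



/-! ### Auxiliary lemmas -/

private lemma sq2' : (Real.sqrt 2)⁻¹ * (Real.sqrt 2)⁻¹ = 1/2 := by
  rw [← mul_inv, ← Real.sqrt_mul_self (by norm_num : (0:ℝ) ≤ 2)]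
  norm_num

private lemma Kbs_orth : Kbs * Kbsᵀ = 1 := by
  ext i j
  fin_cases i <;> fin_cases j <;>
    simp [Kbs, Matrix.mul_apply, Fin.sum_univ_four, Matrix.one_apply,
      Matrix.transpose_apply, Matrix.cons_val_zero, Matrix.cons_val_one, Matrix.head_cons,
      Matrix.vecHead, Matrix.vecTail] <;>
    nlinarith [sq2']

set_option maxHeartbeats 2000000 in
private lemma Kbs_symp : Kbs * Omega4 * Kbsᵀ = Omega4 := by
  have h1 : Omega4 * Kbsᵀ = (Real.sqrt 2)⁻¹ • !![0,1,0,-1; -1,0,1,0; 0,1,0,1; -1,0,-1,0] := by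
    ext i j
    fin_cases i <;> fin_cases j <;>
      simp [Kbs, Omega4, Matrix.mul_apply, Fin.sum_univ_four,
        Matrix.transpose_apply, Matrix.vecHead, Matrix.vecTail]
  rw [mul_assoc, h1]
  ext i j
  fin_cases i <;> fin_cases j <;>
    simp [Kbs, Omega4, Matrix.mul_apply, Fin.sum_univ_four,
      Matrix.vecHead, Matrix.vecTail] <;>
    nlinarith [sq2']

private lemma charpoly_conj_orth (K A : Matrix (Fin 4) (Fin 4) ℝ) (hK : K * Kᵀ = 1) :
    (K * A * Kᵀ).charpoly = A.charpoly := by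
  have hmap : ∀ M N : Matrix (Fin 4) (Fin 4) ℝ,
      (M * N).map (Polynomial.C : ℝ →+* Polynomial ℝ) = M.map Polynomial.C * N.map Polynomial.C :=
    fun M N => Matrix.map_mul
  have hKc : (K.map (Polynomial.C : ℝ →+* Polynomial ℝ)) * (Kᵀ.map Polynomial.C) = 1 := by
    rw [← hmap, hK]; simp [Matrix.map_one]
  have hchar : Matrix.charmatrix (K * A * Kᵀ)
      = K.map Polynomial.C * Matrix.charmatrix A * Kᵀ.map Polynomial.C := by
    unfold Matrix.charmatrix
    simp only [RingHom.mapMatrix_apply]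
    rw [Matrix.mul_sub, Matrix.sub_mul, hmap, hmap]
    congr 1
    have : K.map (Polynomial.C : ℝ →+* Polynomial ℝ) * (Matrix.scalar (Fin 4) Polynomial.X)
          * Kᵀ.map Polynomial.C
        = (Matrix.scalar (Fin 4) Polynomial.X) * (K.map Polynomial.C * Kᵀ.map Polynomial.C) := by
      rw [← (Matrix.scalar_commute Polynomial.X (fun r => Commute.all _ _)
        (K.map Polynomial.C)).eq, mul_assoc]
    rw [this, hKc, mul_one]
  have hKcdet : (K.map (Polynomial.C : ℝ →+* Polynomial ℝ)).det * (Kᵀ.map Polynomial.C).det = 1 := by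
    rw [← Matrix.det_mul, hKc, Matrix.det_one]
  rw [Matrix.charpoly, hchar, Matrix.det_mul, Matrix.det_mul, Matrix.charpoly]
  linear_combination (Matrix.charmatrix A).det * hKcdet

private lemma charpoly_diag (v : Fin 4 → ℝ) :
    (Matrix.diagonal v).charpoly = ∏ i, (Polynomial.X - Polynomial.C (v i)) := by
  rw [Matrix.charpoly]
  have : Matrix.charmatrix (Matrix.diagonal v)
      = Matrix.diagonal (fun i => Polynomial.X - Polynomial.C (v i)) := by
    unfold Matrix.charmatrix
    simp only [RingHom.mapMatrix_apply]
    rw [Matrix.diagonal_map (map_zero Polynomial.C), Matrix.scalar_apply, Matrix.diagonal_sub]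
  rw [this, Matrix.det_diagonal]

private lemma roots_diag (v : Fin 4 → ℝ) :
    (Matrix.diagonal v).charpoly.roots = ↑[v 0, v 1, v 2, v 3] := by
  rw [charpoly_diag]
  have : ∏ i, (Polynomial.X - Polynomial.C (v i))
      = (Multiset.map (fun a => Polynomial.X - Polynomial.C a) ↑[v 0, v 1, v 2, v 3]).prod := by
    simp [Fin.prod_univ_four]; ring
  rw [this, Polynomial.roots_multiset_prod_X_sub_C]

private lemma msort_eq (l l' : List ℝ) (hp : l.Perm l') (hs : l'.Pairwise (· ≤ ·)) :
    Multiset.sort (↑l) (· ≤ ·) = l' := by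
  refine List.Perm.eq_of_pairwise' (Multiset.pairwise_sort (s := (↑l : Multiset ℝ)) (r := (· ≤ ·))) hs ?_
  exact (Multiset.coe_eq_coe.1 (by rw [Multiset.sort_eq])).trans hp

private lemma psd_outer_c (w : Fin 4 → ℂ) : (Matrix.vecMulVec w (star w)).PosSemidef := by
  rw [Matrix.vecMulVec_eq (Fin 1), ← Matrix.conjTranspose_replicateCol]
  exact Matrix.posSemidef_self_mul_conjTranspose _

private lemma psd_outer_r (w : Fin 4 → ℝ) : (Matrix.vecMulVec w w).PosSemidef := by
  have : w = star w := rfl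
  rw [show Matrix.vecMulVec w w = Matrix.vecMulVec w (star w) from by rw [← this],
    Matrix.vecMulVec_eq (Fin 1), ← Matrix.conjTranspose_replicateCol]
  exact Matrix.posSemidef_self_mul_conjTranspose _

private lemma psd_smul_r {A : Matrix (Fin 4) (Fin 4) ℝ} (hA : A.PosSemidef) {c : ℝ}
    (hc : 0 ≤ c) : (c • A).PosSemidef := by
  refine ⟨?_, fun x => ?_⟩
  · have h : (c • A)ᴴ = c • A := by rw [Matrix.conjTranspose_smul, hA.1.eq, star_trivial]
    exact h
  · exact (hA.smul hc).2 x

private lemma piD_psd (r₁ r₂ : ℝ) :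
    (cplx (piD r₁ r₂) + Complex.I • cplx Omega4).PosSemidef := by
  have key : cplx (piD r₁ r₂) + Complex.I • cplx Omega4
      = Matrix.vecMulVec ![(Real.exp (-r₁) : ℂ), -Complex.I * Real.exp r₁, 0, 0]
          (star ![(Real.exp (-r₁) : ℂ), -Complex.I * Real.exp r₁, 0, 0])
        + Matrix.vecMulVec ![0, 0, (Real.exp r₂ : ℂ), -Complex.I * Real.exp (-r₂)]
          (star ![0, 0, (Real.exp r₂ : ℂ), -Complex.I * Real.exp (-r₂)]) := by
    have I2 : Complex.I * Complex.I = -1 := Complex.I_mul_I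
    have F1a : Complex.exp (-(r₁:ℂ)) * Complex.exp (r₁:ℂ) = 1 := by
      rw [← Complex.exp_add]; norm_num
    have F1b : Complex.exp (-(r₂:ℂ)) * Complex.exp (r₂:ℂ) = 1 := by
      rw [← Complex.exp_add]; norm_num
    have F2a : Complex.exp (r₁:ℂ) * Complex.exp (r₁:ℂ) = Complex.exp (2*(r₁:ℂ)) := by
      rw [← Complex.exp_add]; ring_nf
    have F2b : Complex.exp (-(r₂:ℂ)) * Complex.exp (-(r₂:ℂ)) = Complex.exp (-(2*(r₂:ℂ))) := by
      rw [← Complex.exp_add]; ring_nf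
    have F3a : Complex.exp (-(r₁:ℂ)) * Complex.exp (-(r₁:ℂ)) = Complex.exp (-(2*(r₁:ℂ))) := by
      rw [← Complex.exp_add]; ring_nf
    have F3b : Complex.exp (r₂:ℂ) * Complex.exp (r₂:ℂ) = Complex.exp (2*(r₂:ℂ)) := by
      rw [← Complex.exp_add]; ring_nf
    have CE : ∀ z:ℂ, (starRingEnd ℂ) (Complex.exp z) = Complex.exp ((starRingEnd ℂ) z) := by
      intro z
      first
        | exact (Complex.exp_conj z).symm
        | exact Complex.exp_conj z
    ext i j
    fin_cases i <;> fin_cases j <;>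
      simp only [cplx, piD, Matrix.add_apply, Matrix.smul_apply, Matrix.map_apply, Omega4,
        Matrix.vecMulVec_apply, Matrix.diagonal, Matrix.of_apply, Matrix.cons_val',
        Matrix.cons_val_zero, Matrix.cons_val_one, Matrix.head_cons, Matrix.empty_val',
        Matrix.cons_val_fin_one, Matrix.head_fin_const, Pi.star_apply, RCLike.star_def,
        Matrix.cons_val_two, Matrix.cons_val_three, Matrix.tail_cons] <;>
      push_cast <;>
      (try norm_num [CE, _root_.map_mul, _root_.map_neg, Complex.conj_I, Complex.conj_ofReal,
        smul_eq_mul]) <;>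
      first
        | linear_combination (-Complex.I) * F1a
        | linear_combination (-Complex.I) * F1b
        | linear_combination -F3a
        | linear_combination -F3b
        | linear_combination (Complex.exp (r₁:ℂ) * Complex.exp (r₁:ℂ)) * I2 - F2a
        | linear_combination (Complex.exp (-(r₂:ℂ)) * Complex.exp (-(r₂:ℂ))) * I2 - F2b
        | norm_num [Matrix.vecHead, Matrix.vecTail]
  rw [key]
  exact (psd_outer_c _).add (psd_outer_c _)

private lemma cplx_mul (A B : Matrix (Fin 4) (Fin 4) ℝ) : cplx (A * B) = cplx A * cplx B := by
  show (A * B).map (Complex.ofRealHom : ℝ →+* ℂ)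
    = A.map Complex.ofRealHom * B.map Complex.ofRealHom
  exact Matrix.map_mul

private lemma cplx_conjT (A : Matrix (Fin 4) (Fin 4) ℝ) : cplx (Aᵀ) = (cplx A)ᴴ := by
  ext i j
  simp [cplx, Matrix.conjTranspose_apply, Complex.conj_ofReal]

private lemma pure_p (r₁ r₂ : ℝ) : IsPureCov (Kbs * piD r₁ r₂ * Kbsᵀ) := by
  refine ⟨⟨?_, ?_⟩, ?_⟩
  · show (Kbs * piD r₁ r₂ * Kbsᵀ)ᵀ = _
    rw [Matrix.transpose_mul, Matrix.transpose_mul, Matrix.transpose_transpose]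
    rw [show (piD r₁ r₂)ᵀ = piD r₁ r₂ from Matrix.diagonal_transpose _, mul_assoc]
  · have hO : cplx Kbs * (Complex.I • cplx Omega4) * (cplx Kbs)ᴴ
        = Complex.I • cplx Omega4 := by
      rw [← cplx_conjT, mul_smul_comm, smul_mul_assoc, ← cplx_mul, ← cplx_mul, Kbs_symp]
    have hP : cplx (Kbs * piD r₁ r₂ * Kbsᵀ) = cplx Kbs * cplx (piD r₁ r₂) * (cplx Kbs)ᴴ := by
      rw [cplx_mul, cplx_mul, cplx_conjT]
    rw [hP, ← hO]
    have : cplx Kbs * cplx (piD r₁ r₂) * (cplx Kbs)ᴴ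
        + cplx Kbs * (Complex.I • cplx Omega4) * (cplx Kbs)ᴴ
        = cplx Kbs * (cplx (piD r₁ r₂) + Complex.I • cplx Omega4) * (cplx Kbs)ᴴ := by
      rw [Matrix.mul_add, Matrix.add_mul]
    rw [this]
    exact (piD_psd r₁ r₂).mul_mul_conjTranspose_same _
  · have hdetK : Kbs.det * Kbs.det = 1 := by
      have := congrArg Matrix.det Kbs_orth
      rwa [Matrix.det_mul, Matrix.det_transpose, Matrix.det_one] at this
    rw [Matrix.det_mul, Matrix.det_mul, Matrix.det_transpose]
    have hdetD : (piD r₁ r₂).det = 1 := by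
      rw [piD, Matrix.det_diagonal, Fin.prod_univ_four]
      simp only [Matrix.cons_val_zero, Matrix.cons_val_one, Matrix.head_cons,
        Matrix.cons_val_two, Matrix.cons_val_three, Matrix.tail_cons]
      rw [← Real.exp_add, ← Real.exp_add, ← Real.exp_add]
      norm_num
    rw [hdetD]
    linarith [hdetK]

private lemma log_eigs (r₁ r₂ : ℝ) (h1 : 0 ≤ r₁) (h2 : 0 ≤ r₂) :
    Real.log (eig 2 (Kbs * piD r₁ r₂ * Kbsᵀ)) + Real.log (eig 3 (Kbs * piD r₁ r₂ * Kbsᵀ))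
      = 2*r₁ + 2*r₂ := by
  have hroots : (Kbs * piD r₁ r₂ * Kbsᵀ).charpoly.roots
      = ↑[Real.exp (-(2*r₁)), Real.exp (2*r₁), Real.exp (2*r₂), Real.exp (-(2*r₂))] := by
    rw [charpoly_conj_orth _ _ Kbs_orth, piD, roots_diag]
    norm_num
    exact List.Perm.refl _
  have key : ∀ l' : List ℝ,
      ([Real.exp (-(2*r₁)), Real.exp (2*r₁), Real.exp (2*r₂), Real.exp (-(2*r₂))] : List ℝ).Perm l'
      → l'.Pairwise (· ≤ ·)
      → sortedEigs (Kbs * piD r₁ r₂ * Kbsᵀ) = l' := by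
    intro l' hp hs
    rw [sortedEigs, hroots]
    exact msort_eq _ _ hp hs
  rcases le_total r₁ r₂ with h | h
  · have hsort := key [Real.exp (-(2*r₂)), Real.exp (-(2*r₁)), Real.exp (2*r₁), Real.exp (2*r₂)]
      (by rw [List.perm_iff_count]; intro x; simp [List.count_cons]; ring)
      (by
        have hc : List.IsChain (fun a b : ℝ => a ≤ b)
            [Real.exp (-(2*r₂)), Real.exp (-(2*r₁)), Real.exp (2*r₁), Real.exp (2*r₂)] := by
          simp only [List.isChain_cons_cons, List.isChain_singleton, and_true]
          refine ⟨?_, ?_, ?_⟩ <;> (apply Real.exp_le_exp.mpr; linarith)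
        exact List.isChain_iff_pairwise.mp hc)
    unfold eig
    rw [hsort]
    simp only [List.getD_cons_succ, List.getD_cons_zero]
    rw [Real.log_exp, Real.log_exp]
    try ring
  · have hsort := key [Real.exp (-(2*r₁)), Real.exp (-(2*r₂)), Real.exp (2*r₂), Real.exp (2*r₁)]
      (by rw [List.perm_iff_count]; intro x; simp [List.count_cons]; ring)
      (by
        have hc : List.IsChain (fun a b : ℝ => a ≤ b)
            [Real.exp (-(2*r₁)), Real.exp (-(2*r₂)), Real.exp (2*r₂), Real.exp (2*r₁)] := by
          simp only [List.isChain_cons_cons, List.isChain_singleton, and_true]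
          refine ⟨?_, ?_, ?_⟩ <;> (apply Real.exp_le_exp.mpr; linarith)
        exact List.isChain_iff_pairwise.mp hc)
    unfold eig
    rw [hsort]
    simp only [List.getD_cons_succ, List.getD_cons_zero]
    rw [Real.log_exp, Real.log_exp]
    try ring

/-- The squeezing of formation of the special state σ_sp is at
most r₁ + r₂. -/
theorem sof_special_state_le
    (r₁ r₂ l₁ l₂ α θ : ℝ) (hr₁ : 0 ≤ r₁) (hr₂ : 0 ≤ r₂)
    (hl₁ : 0 ≤ l₁) (hl₂ : l₁ ≤ l₂) (hα : |α| ≤ Real.exp (-(r₁ + r₂))) :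
    SOF (sigmaSp r₁ r₂ l₁ l₂ α θ) ≤ r₁ + r₂ := by
  classical
  set p := Kbs * piD r₁ r₂ * Kbsᵀ with hp
  have hl₂ : 0 ≤ l₂ := le_trans hl₁ hl₂
  have hdiff : (sigmaSp r₁ r₂ l₁ l₂ α θ - p).PosSemidef := by
    have hEq : sigmaSp r₁ r₂ l₁ l₂ α θ - p
        = Kbs * (l₁ • Matrix.vecMulVec (phi1v α θ) (phi1v α θ)
            + l₂ • Matrix.vecMulVec (phi2v α θ) (phi2v α θ)) * Kbsᵀ := by
      rw [sigmaSp, hp]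
      rw [Matrix.mul_add, Matrix.mul_add, Matrix.add_mul, Matrix.add_mul, Matrix.mul_add,
        Matrix.add_mul]
      abel
    rw [hEq]
    have hM : (l₁ • Matrix.vecMulVec (phi1v α θ) (phi1v α θ)
        + l₂ • Matrix.vecMulVec (phi2v α θ) (phi2v α θ)).PosSemidef :=
      (psd_smul_r (psd_outer_r _) hl₁).add (psd_smul_r (psd_outer_r _) hl₂)
    have := hM.mul_mul_conjTranspose_same Kbs
    rwa [Matrix.conjTranspose_eq_transpose_of_trivial] at this
  have hmem : SOFpure p ∈ { s : ℝ | ∃ q, IsPureCov q ∧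
      (sigmaSp r₁ r₂ l₁ l₂ α θ - q).PosSemidef ∧ s = SOFpure q } :=
    ⟨p, pure_p r₁ r₂, hdiff, rfl⟩
  have hval : SOFpure p = r₁ + r₂ := by
    rw [SOFpure, hp, log_eigs r₁ r₂ hr₁ hr₂]
    ring
  rw [SOF]
  by_cases hbdd : BddBelow { s : ℝ | ∃ q, IsPureCov q ∧
      (sigmaSp r₁ r₂ l₁ l₂ α θ - q).PosSemidef ∧ s = SOFpure q }
  · calc sInf _ ≤ SOFpure p := csInf_le hbdd hmem
      _ = r₁ + r₂ := hval
  · rw [Real.sInf_of_not_bddBelow hbdd]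
    linarith


end
end

section
/- Let r1, r2 ≥ 0, λ2 ≥ 0 and α ∈ ℝ with |α| ≤ e^{-(r1+r2)}, let σ_dcc = K_bs (π_d(r1,r2) + λ2·N_α) K_bs^T, and let S_2(r) = K_bs · diag(e^{r}, e^{−r}, e^{−r}, e^{r}) · K_bs^T be the two-mode squeezer. Then the state S_2(r) σ_dcc S_2(r)^T is separable, i.e., its partial transpose satisfies Λ S_2(r) σ_dcc S_2(r)^T Λ + iΩ ⪰ 0, if and only if (r1+r2)/2 ≤ r ≤ (1/4)·[ ln((λ2 + e^{2r1})/(1 + λ2 α² e^{2r1})) + ln((λ2 + e^{2r2})/(1 + λ2 α² e^{2r2})) ]. -/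
open Matrix Real ComplexOrder

noncomputable section

private def K0 : Matrix (Fin 4) (Fin 4) ℝ := !![1,0,1,0; 0,1,0,1; -1,0,1,0; 0,-1,0,1]

private lemma K0T : K0ᵀ = !![1,0,-1,0; 0,1,0,-1; 1,0,1,0; 0,1,0,1] := by
  ext i j
  fin_cases i <;> fin_cases j <;> simp [K0, Matrix.transpose_apply]

private lemma sqrt2_inv_mul : (Real.sqrt 2)⁻¹ * (Real.sqrt 2)⁻¹ = (2:ℝ)⁻¹ := by
  rw [← mul_inv, Real.mul_self_sqrt (by norm_num)]

private lemma Kbs_conj (X : Matrix (Fin 4) (Fin 4) ℝ) :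
    Kbs * X * Kbsᵀ = (2:ℝ)⁻¹ • (K0 * X * K0ᵀ) := by
  show ((Real.sqrt 2)⁻¹ • K0) * X * ((Real.sqrt 2)⁻¹ • K0)ᵀ = _
  rw [Matrix.transpose_smul, Matrix.smul_mul, Matrix.smul_mul, Matrix.mul_smul, smul_smul,
    sqrt2_inv_mul]

private lemma KtK : Kbsᵀ * Kbs = 1 := by
  show ((Real.sqrt 2)⁻¹ • K0)ᵀ * ((Real.sqrt 2)⁻¹ • K0) = 1
  rw [Matrix.transpose_smul, Matrix.smul_mul, Matrix.mul_smul, smul_smul, sqrt2_inv_mul]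
  have : K0ᵀ * K0 = (2:ℝ) • 1 := by
    rw [K0T]
    ext i j
    fin_cases i <;> fin_cases j <;>
      norm_num [K0, Matrix.mul_apply, Fin.sum_univ_succ, Matrix.one_apply]
  rw [this, smul_smul]; norm_num

private lemma sandwich (X Y : Matrix (Fin 4) (Fin 4) ℝ) :
    (Kbs * X * Kbsᵀ) * (Kbs * Y * Kbsᵀ) = Kbs * (X*Y) * Kbsᵀ := by
  calc (Kbs * X * Kbsᵀ) * (Kbs * Y * Kbsᵀ)
      = Kbs * X * (Kbsᵀ * Kbs) * (Y * Kbsᵀ) := by simp only [Matrix.mul_assoc]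
    _ = Kbs * (X*Y) * Kbsᵀ := by rw [KtK, Matrix.mul_one]; simp only [Matrix.mul_assoc]

private lemma conj_dcc (q1 q2 p1 p2 c : ℝ) :
    ptrans ((2:ℝ)⁻¹ • (K0 * !![q1,0,c,0; 0,p1,0,c; c,0,q2,0; 0,c,0,p2] * K0ᵀ)) =
    !![(q1+q2)/2 + c, 0, (q2-q1)/2, 0;
       0, (p1+p2)/2 + c, 0, (p1-p2)/2;
       (q2-q1)/2, 0, (q1+q2)/2 - c, 0;
       0, (p1-p2)/2, 0, (p1+p2)/2 - c] := by
  unfold ptrans Lam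
  rw [K0T]
  ext i j
  fin_cases i <;> fin_cases j <;>
    (simp [Matrix.diagonal_mul, Matrix.mul_diagonal, Matrix.smul_apply, K0,
        Matrix.mul_apply, Fin.sum_univ_four]; try ring)

private lemma ptrans_eq (r r₁ r₂ l₂ α : ℝ) :
    ptrans (S2 r * sigmaDcc r₁ r₂ l₂ α * (S2 r)ᵀ) =
    !![(Real.exp r^2 * (Real.exp (-(2*r₁)) + l₂*α^2) + Real.exp (-r)^2 * (Real.exp (2*r₂) + l₂))/2
          + l₂*α*(Real.exp r * Real.exp (-r)), 0,
       (Real.exp (-r)^2 * (Real.exp (2*r₂) + l₂) - Real.exp r^2 * (Real.exp (-(2*r₁)) + l₂*α^2))/2, 0;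
       0, (Real.exp (-r)^2 * (Real.exp (2*r₁) + l₂) + Real.exp r^2 * (Real.exp (-(2*r₂)) + l₂*α^2))/2
          + l₂*α*(Real.exp r * Real.exp (-r)), 0,
       (Real.exp (-r)^2 * (Real.exp (2*r₁) + l₂) - Real.exp r^2 * (Real.exp (-(2*r₂)) + l₂*α^2))/2;
       (Real.exp (-r)^2 * (Real.exp (2*r₂) + l₂) - Real.exp r^2 * (Real.exp (-(2*r₁)) + l₂*α^2))/2, 0,
       (Real.exp r^2 * (Real.exp (-(2*r₁)) + l₂*α^2) + Real.exp (-r)^2 * (Real.exp (2*r₂) + l₂))/2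
          - l₂*α*(Real.exp r * Real.exp (-r)), 0;
       0, (Real.exp (-r)^2 * (Real.exp (2*r₁) + l₂) - Real.exp r^2 * (Real.exp (-(2*r₂)) + l₂*α^2))/2, 0,
       (Real.exp (-r)^2 * (Real.exp (2*r₁) + l₂) + Real.exp r^2 * (Real.exp (-(2*r₂)) + l₂*α^2))/2
          - l₂*α*(Real.exp r * Real.exp (-r))] := by
  have hT : (S2 r)ᵀ = S2 r := by
    unfold S2
    rw [Matrix.transpose_mul, Matrix.transpose_mul, Matrix.transpose_transpose,
      Matrix.diagonal_transpose, ← Matrix.mul_assoc]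
  have h1 : S2 r * sigmaDcc r₁ r₂ l₂ α * (S2 r)ᵀ =
      Kbs * (Matrix.diagonal ![Real.exp r, Real.exp (-r), Real.exp (-r), Real.exp r] *
        (piD r₁ r₂ + l₂ • Nmat α) *
        Matrix.diagonal ![Real.exp r, Real.exp (-r), Real.exp (-r), Real.exp r]) * Kbsᵀ := by
    rw [hT]
    unfold S2 sigmaDcc
    rw [sandwich, sandwich]
  have h2 : Matrix.diagonal ![Real.exp r, Real.exp (-r), Real.exp (-r), Real.exp r] *
      (piD r₁ r₂ + l₂ • Nmat α) *
      Matrix.diagonal ![Real.exp r, Real.exp (-r), Real.exp (-r), Real.exp r] =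
      !![Real.exp r^2 * (Real.exp (-(2*r₁)) + l₂*α^2), 0, l₂*α*(Real.exp r * Real.exp (-r)), 0;
         0, Real.exp (-r)^2 * (Real.exp (2*r₁) + l₂), 0, l₂*α*(Real.exp r * Real.exp (-r));
         l₂*α*(Real.exp r * Real.exp (-r)), 0, Real.exp (-r)^2 * (Real.exp (2*r₂) + l₂), 0;
         0, l₂*α*(Real.exp r * Real.exp (-r)), 0, Real.exp r^2 * (Real.exp (-(2*r₂)) + l₂*α^2)] := by
    ext i j
    fin_cases i <;> fin_cases j <;>
      (simp [piD, Nmat, Matrix.diagonal_mul, Matrix.mul_diagonal]; try ring)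
  rw [h1, h2, Kbs_conj, conj_dcc]


private def AmG (s00 s02 s22 s11 s13 s33 : ℝ) : Matrix (Fin 4) (Fin 4) ℂ :=
  !![(s00:ℂ), Complex.I, (s02:ℂ), 0;
     -Complex.I, (s11:ℂ), 0, (s13:ℂ);
     (s02:ℂ), 0, (s22:ℂ), Complex.I;
     0, (s13:ℂ), -Complex.I, (s33:ℂ)]

private lemma AmG_herm (s00 s02 s22 s11 s13 s33 : ℝ) : (AmG s00 s02 s22 s11 s13 s33).IsHermitian := by
  ext i j
  fin_cases i <;> fin_cases j <;>
    simp [AmG, Matrix.conjTranspose_apply, Complex.ext_iff]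

private lemma AmG_det (s00 s02 s22 s11 s13 s33 : ℝ) :
    (AmG s00 s02 s22 s11 s13 s33).det =
      (((s00*s22 - s02^2)*(s11*s33 - s13^2) - s00*s11 - s22*s33 - 2*s02*s13 + 1 : ℝ) : ℂ) := by
  simp [AmG, Matrix.det_succ_row_zero, Fin.sum_univ_succ, Fin.succAbove]
  norm_num [Complex.ext_iff, ← Complex.ofReal_pow]
  ring

private lemma psd2 (p q s : ℝ) (hp : 0 ≤ p) (hs : 0 ≤ s) (hd : 0 ≤ p*s - q^2) :
    ∀ x y : ℝ, 0 ≤ p*x^2 + 2*q*x*y + s*y^2 := by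
  intro x y
  rcases eq_or_lt_of_le hp with h | h
  · have hq : q = 0 := by nlinarith [sq_nonneg q]
    rw [← h, hq]; nlinarith [sq_nonneg y]
  · nlinarith [sq_nonneg (p*x + q*y), mul_nonneg hd (sq_nonneg y)]

private lemma key (e00 e01 e11 f00 f01 f11 : ℝ)
    (hf00 : 0 < f00) (hdp : 0 < f00*f11 - f01^2)
    (hsum : 0 ≤ (e00*(f00*f11 - f01^2) - f11) + (e11*(f00*f11 - f01^2) - f00))
    (hD : 0 ≤ (e00*e11 - e01^2)*(f00*f11 - f01^2)
        - e00*f00 - e11*f11 - 2*e01*f01 + 1) :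
    ∀ u1 u2 w1 w2 : ℝ,
      0 ≤ e00*u1^2 + 2*e01*u1*u2 + e11*u2^2 + f00*w1^2 + 2*f01*w1*w2 + f11*w2^2
          - 2*u1*w1 - 2*u2*w2 := by
  intro u1 u2 w1 w2
  set dp := f00*f11 - f01^2 with hdpd
  set g0 := e00*dp - f11 with hg0
  set g1 := e01*dp + f01 with hg1
  set g2 := e11*dp - f00 with hg2
  have hgg : g0*g2 - g1^2 = ((e00*e11 - e01^2)*dp - e00*f00 - e11*f11 - 2*e01*f01 + 1) * dp := by
    simp only [hg0, hg1, hg2, hdpd]; ring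
  have hdet : 0 ≤ g0*g2 - g1^2 := by rw [hgg]; exact mul_nonneg hD hdp.le
  have hg0n : 0 ≤ g0 := by nlinarith [sq_nonneg g1]
  have hg2n : 0 ≤ g2 := by nlinarith [sq_nonneg g1]
  have hquad := psd2 g0 g1 g2 hg0n hg2n hdet u1 u2
  have hident : (e00*u1^2 + 2*e01*u1*u2 + e11*u2^2 + f00*w1^2 + 2*f01*w1*w2 + f11*w2^2
      - 2*u1*w1 - 2*u2*w2) * (dp * f00)
      = dp*(f00*w1 + f01*w2 - u1)^2 + (dp*w2 - f00*u2 + f01*u1)^2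
        + f00*(g0*u1^2 + 2*g1*u1*u2 + g2*u2^2) := by
    simp only [hg0, hg1, hg2, hdpd]; ring
  nlinarith [mul_nonneg hdp.le (sq_nonneg (f00*w1 + f01*w2 - u1)),
    sq_nonneg (dp*w2 - f00*u2 + f01*u1), mul_nonneg hf00.le hquad,
    mul_pos hdp hf00]

set_option maxHeartbeats 1000000 in
private lemma AmG_psd (s00 s02 s22 s11 s13 s33 : ℝ)
    (hf00 : 0 < s11) (hdp : 0 < s11*s33 - s13^2)
    (hsum : 0 ≤ (s00*(s11*s33 - s13^2) - s33) + (s22*(s11*s33 - s13^2) - s11))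
    (hD : 0 ≤ (s00*s22 - s02^2)*(s11*s33 - s13^2) - s00*s11 - s22*s33 - 2*s02*s13 + 1) :
    (AmG s00 s02 s22 s11 s13 s33).PosSemidef := by
  refine Matrix.PosSemidef.of_dotProduct_mulVec_nonneg (AmG_herm _ _ _ _ _ _) fun v => ?_
  have hmv : (AmG s00 s02 s22 s11 s13 s33) *ᵥ v =
      ![(s00:ℂ)*v 0 + Complex.I*v 1 + (s02:ℂ)*v 2,
        -(Complex.I*v 0) + (s11:ℂ)*v 1 + (s13:ℂ)*v 3,
        (s02:ℂ)*v 0 + (s22:ℂ)*v 2 + Complex.I*v 3,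
        (s13:ℂ)*v 1 - Complex.I*v 2 + (s33:ℂ)*v 3] := by
    funext i
    fin_cases i <;> simp [AmG, Matrix.mulVec, dotProduct, Fin.sum_univ_four] <;> ring
  rw [Complex.nonneg_iff, hmv]
  have k1 := key s00 s02 s22 s11 s13 s33 hf00 hdp hsum hD (v 0).re (v 2).re (v 1).im (v 3).im
  have k2 := key s00 s02 s22 s11 s13 s33 hf00 hdp hsum hD (v 0).im (v 2).im (-(v 1).re) (-(v 3).re)
  simp only [dotProduct, Fin.sum_univ_four, Pi.star_apply, Matrix.cons_val_zero,
    Matrix.cons_val_one, Matrix.head_cons, Matrix.cons_val_two, Matrix.tail_cons,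
    Matrix.cons_val_three, Complex.add_re, Complex.add_im, Complex.sub_re, Complex.sub_im,
    Complex.mul_re, Complex.mul_im, Complex.I_re, Complex.I_im, Complex.ofReal_re,
    Complex.ofReal_im, Complex.neg_re, Complex.neg_im, Complex.conj_re, Complex.conj_im,
    Complex.zero_re, Complex.zero_im, Complex.star_def]
  constructor
  · linarith [k1, k2]
  · ring

private lemma AmG_det_nonneg (s00 s02 s22 s11 s13 s33 : ℝ)
    (h : (AmG s00 s02 s22 s11 s13 s33).PosSemidef) :
    0 ≤ (s00*s22 - s02^2)*(s11*s33 - s13^2) - s00*s11 - s22*s33 - 2*s02*s13 + 1 := by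
  have hd := h.det_nonneg
  rw [AmG_det] at hd
  exact Complex.zero_le_real.mp hd

private lemma f00_pos (p1 p2 c : ℝ) (hp1 : 0 < p1) (hp2 : 0 < p2) (hd : c^2 < p1*p2) :
    0 < (p1 + p2)/2 + c := by
  by_contra h
  push_neg at h
  have hc : (p1+p2)/2 ≤ -c := by linarith
  have h2 : ((p1+p2)/2)^2 ≤ (-c)^2 := pow_le_pow_left₀ (by linarith) hc 2
  nlinarith [sq_nonneg (p1 - p2)]

private lemma cplx_eq (s00 s02 s22 s11 s13 s33 : ℝ) :
    cplx !![s00,0,s02,0; 0,s11,0,s13; s02,0,s22,0; 0,s13,0,s33] + Complex.I • cplx Omega4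
      = AmG s00 s02 s22 s11 s13 s33 := by
  ext i j
  fin_cases i <;> fin_cases j <;>
    simp [cplx, Omega4, AmG, Matrix.map_apply, Matrix.vecHead, Matrix.vecTail]


set_option maxHeartbeats 1000000 in
/-- S₂(r) σ_dcc S₂(r)ᵀ is separable iff
(r₁+r₂)/2 ≤ r ≤ (1/4)·Σⱼ ln((λ₂+e^{2rⱼ})/(1+λ₂α²e^{2rⱼ})). -/
theorem separability_interval
    (r₁ r₂ l₂ α r : ℝ) (hr₁ : 0 ≤ r₁) (hr₂ : 0 ≤ r₂)
    (hl₂ : 0 ≤ l₂) (hα : |α| ≤ Real.exp (-(r₁ + r₂))) :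
    IsSep (S2 r * sigmaDcc r₁ r₂ l₂ α * (S2 r)ᵀ) ↔
      ((r₁ + r₂) / 2 ≤ r ∧
        r ≤ (1/4) *
          (Real.log ((l₂ + Real.exp (2*r₁)) / (1 + l₂ * α^2 * Real.exp (2*r₁)))
            + Real.log ((l₂ + Real.exp (2*r₂)) / (1 + l₂ * α^2 * Real.exp (2*r₂))))) := by
  have hiff : IsSep (S2 r * sigmaDcc r₁ r₂ l₂ α * (S2 r)ᵀ) ↔
      (AmG
        ((Real.exp r^2 * (Real.exp (-(2*r₁)) + l₂*α^2) + Real.exp (-r)^2 * (Real.exp (2*r₂) + l₂))/2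
          + l₂*α*(Real.exp r * Real.exp (-r)))
        ((Real.exp (-r)^2 * (Real.exp (2*r₂) + l₂) - Real.exp r^2 * (Real.exp (-(2*r₁)) + l₂*α^2))/2)
        ((Real.exp r^2 * (Real.exp (-(2*r₁)) + l₂*α^2) + Real.exp (-r)^2 * (Real.exp (2*r₂) + l₂))/2
          - l₂*α*(Real.exp r * Real.exp (-r)))
        ((Real.exp (-r)^2 * (Real.exp (2*r₁) + l₂) + Real.exp r^2 * (Real.exp (-(2*r₂)) + l₂*α^2))/2
          + l₂*α*(Real.exp r * Real.exp (-r)))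
        ((Real.exp (-r)^2 * (Real.exp (2*r₁) + l₂) - Real.exp r^2 * (Real.exp (-(2*r₂)) + l₂*α^2))/2)
        ((Real.exp (-r)^2 * (Real.exp (2*r₁) + l₂) + Real.exp r^2 * (Real.exp (-(2*r₂)) + l₂*α^2))/2
          - l₂*α*(Real.exp r * Real.exp (-r)))).PosSemidef := by
    unfold IsSep
    rw [ptrans_eq, cplx_eq]
  rw [hiff]
  simp only [Real.exp_neg]
  -- atoms
  set X := Real.exp r with hXdef
  set A := Real.exp (2*r₁) with hAdef
  set B := Real.exp (2*r₂) with hBdef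
  have hX : 0 < X := Real.exp_pos r
  have hA : 0 < A := Real.exp_pos _
  have hB : 0 < B := Real.exp_pos _
  have hA1 : 1 ≤ A := by rw [hAdef]; nlinarith [Real.add_one_le_exp (2*r₁)]
  have hB1 : 1 ≤ B := by rw [hBdef]; nlinarith [Real.add_one_le_exp (2*r₂)]
  -- |α|² ab ≤ 1
  have hα2 : α^2 * (A*B) ≤ 1 := by
    have h1 : α^2 ≤ Real.exp (-(r₁+r₂))^2 := by
      have := abs_nonneg α
      nlinarith [hα, sq_abs α]
    have h2 : Real.exp (-(r₁+r₂))^2 * (A*B) = 1 := by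
      have e : Real.exp (-(r₁+r₂))^2 * (A*B)
          = Real.exp (-(r₁+r₂) + -(r₁+r₂) + (2*r₁ + 2*r₂)) := by
        rw [hAdef, hBdef, Real.exp_add, Real.exp_add, Real.exp_add]; ring
      rw [e, show -(r₁ + r₂) + -(r₁ + r₂) + (2*r₁ + 2*r₂) = 0 by ring, Real.exp_zero]
    nlinarith [mul_pos hA hB, h1]
  -- abbreviations for the six entries
  set s00 := (X^2 * (A⁻¹ + l₂*α^2) + (X⁻¹)^2 * (B + l₂))/2 + l₂*α*(X * X⁻¹) with hs00
  set s02 := ((X⁻¹)^2 * (B + l₂) - X^2 * (A⁻¹ + l₂*α^2))/2 with hs02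
  set s22 := (X^2 * (A⁻¹ + l₂*α^2) + (X⁻¹)^2 * (B + l₂))/2 - l₂*α*(X * X⁻¹) with hs22
  set s11 := ((X⁻¹)^2 * (A + l₂) + X^2 * (B⁻¹ + l₂*α^2))/2 + l₂*α*(X * X⁻¹) with hs11
  set s13 := ((X⁻¹)^2 * (A + l₂) - X^2 * (B⁻¹ + l₂*α^2))/2 with hs13
  set s33 := ((X⁻¹)^2 * (A + l₂) + X^2 * (B⁻¹ + l₂*α^2))/2 - l₂*α*(X * X⁻¹) with hs33
  clear_value s00 s02 s22 s11 s13 s33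
  -- scalar facts
  have hK1 : 0 < 1 + l₂*α^2*A := by positivity
  have hK2 : 0 < 1 + l₂*α^2*B := by positivity
  have hdp_eq : s11*s33 - s13^2 = (A + l₂ + l₂*α^2*A*B)/B := by
    rw [hs11, hs33, hs13]
    field_simp
    ring
  have hdp : 0 < s11*s33 - s13^2 := by
    rw [hdp_eq]; positivity
  have habK : A*B*((1 + l₂*α^2*A)*(1 + l₂*α^2*B)) ≤ (l₂+A)*(l₂+B) := by
    have e1 : B*(1 + l₂*α^2*A) ≤ B + l₂ := by nlinarith [hα2, hl₂]
    have e2 : A*(1 + l₂*α^2*B) ≤ A + l₂ := by nlinarith [hα2, hl₂]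
    have e3 : A*B*((1 + l₂*α^2*A)*(1 + l₂*α^2*B)) = (B*(1 + l₂*α^2*A)) * (A*(1 + l₂*α^2*B)) := by
      ring
    rw [e3]
    have := mul_le_mul e1 e2 (by positivity) (by nlinarith)
    nlinarith [this]
  have hDid : ((s00*s22 - s02^2)*(s11*s33 - s13^2) - s00*s11 - s22*s33 - 2*s02*s13 + 1) * (A*B*X^4)
      = (X^4 - A*B) * ((l₂+A)*(l₂+B) - X^4*((1 + l₂*α^2*A)*(1 + l₂*α^2*B))) := by
    rw [hs00, hs02, hs22, hs11, hs13, hs33]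
    field_simp
    ring
  -- region ↔ polynomial bounds
  have hU : (0:ℝ) < (l₂ + A) / (1 + l₂*α^2*A) := by positivity
  have hV : (0:ℝ) < (l₂ + B) / (1 + l₂*α^2*B) := by positivity
  have hX4 : Real.exp (4*r) = X^4 := by
    rw [hXdef, show (4:ℝ)*r = r+r+(r+r) by ring, Real.exp_add, Real.exp_add]; ring
  have hlow : ((r₁ + r₂) / 2 ≤ r) ↔ A*B ≤ X^4 := by
    rw [hAdef, hBdef, ← Real.exp_add, ← hX4, Real.exp_le_exp]
    constructor <;> intro h <;> linarith
  have hupp : (r ≤ (1/4) * (Real.log ((l₂ + A) / (1 + l₂*α^2*A))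
        + Real.log ((l₂ + B) / (1 + l₂*α^2*B))))
      ↔ X^4*((1 + l₂*α^2*A)*(1 + l₂*α^2*B)) ≤ (l₂+A)*(l₂+B) := by
    rw [← Real.log_mul hU.ne' hV.ne']
    rw [div_mul_div_comm]
    constructor
    · intro h
      have h4 : 4*r ≤ Real.log ((l₂+A)*(l₂+B) / ((1 + l₂*α^2*A)*(1 + l₂*α^2*B))) := by linarith
      have := (Real.le_log_iff_exp_le (by positivity)).mp h4
      rw [hX4] at this
      rw [le_div_iff₀ (by positivity)] at this
      linarith [this]
    · intro h
      have h5 : Real.exp (4*r) ≤ (l₂+A)*(l₂+B) / ((1 + l₂*α^2*A)*(1 + l₂*α^2*B)) := by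
        rw [hX4, le_div_iff₀ (by positivity)]
        linarith
      have := (Real.le_log_iff_exp_le (by positivity)).mpr h5
      linarith
  rw [hlow, hupp]
  constructor
  · -- PSD → bounds
    intro hpsd
    have hD0 := AmG_det_nonneg _ _ _ _ _ _ hpsd
    have hprod : 0 ≤ (X^4 - A*B) * ((l₂+A)*(l₂+B) - X^4*((1 + l₂*α^2*A)*(1 + l₂*α^2*B))) := by
      have hge := mul_nonneg hD0 (le_of_lt (mul_pos (mul_pos hA hB) (pow_pos hX 4)))
      rw [hDid] at hge
      exact hge
    have hKpos : 0 < (1 + l₂*α^2*A)*(1 + l₂*α^2*B) := mul_pos hK1 hK2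
    have h1 : A*B ≤ X^4 := by
      by_contra hc
      push_neg at hc
      have h2 : 0 < (l₂+A)*(l₂+B) - X^4*((1 + l₂*α^2*A)*(1 + l₂*α^2*B)) := by
        linarith [habK, mul_pos (sub_pos.2 hc) hKpos]
      linarith [mul_pos (sub_pos.2 hc) h2, hprod]
    refine ⟨h1, ?_⟩
    by_contra hc
    push_neg at hc
    have hX4le : X^4 ≤ A*B := by
      by_contra hc2
      push_neg at hc2
      linarith [mul_pos (sub_pos.2 hc2) (sub_pos.2 hc), hprod]
    linarith [mul_le_mul_of_nonneg_right hX4le hKpos.le, habK, hc]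
  · -- bounds → PSD
    rintro ⟨h1, h2⟩
    have hD0 : 0 ≤ (s00*s22 - s02^2)*(s11*s33 - s13^2) - s00*s11 - s22*s33 - 2*s02*s13 + 1 := by
      have hf : 0 ≤ (X^4 - A*B) * ((l₂+A)*(l₂+B) - X^4*((1 + l₂*α^2*A)*(1 + l₂*α^2*B))) :=
        mul_nonneg (by linarith) (by linarith)
      by_contra hcD
      push_neg at hcD
      have hneg := mul_neg_of_neg_of_pos hcD (mul_pos (mul_pos hA hB) (pow_pos hX 4))
      rw [hDid] at hneg
      linarith
    have hsum : 0 ≤ (s00*(s11*s33 - s13^2) - s33) + (s22*(s11*s33 - s13^2) - s11) := by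
      have hid : ((s00*(s11*s33 - s13^2) - s33) + (s22*(s11*s33 - s13^2) - s11)) * (A*B*X^2)
          = l₂*(A^2 + A^2*B^2*α^2 + X^4 + X^4*A^2*α^2)
            + l₂^2*(A + A^2*B*α^2 + X^4*A*α^2 + X^4*A^2*B*α^4) := by
        rw [hs00, hs22, hs11, hs13, hs33]
        field_simp
        ring
      have hrhs : 0 ≤ l₂*(A^2 + A^2*B^2*α^2 + X^4 + X^4*A^2*α^2)
            + l₂^2*(A + A^2*B*α^2 + X^4*A*α^2 + X^4*A^2*B*α^4) :=
        add_nonneg (mul_nonneg hl₂ (by positivity)) (mul_nonneg (sq_nonneg l₂) (by positivity))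
      by_contra hcD
      push_neg at hcD
      have hneg := mul_neg_of_neg_of_pos hcD (mul_pos (mul_pos hA hB) (pow_pos hX 2))
      rw [hid] at hneg
      linarith
    have hp1 : 0 < (X⁻¹)^2 * (A + l₂) := by
      have : 0 < A + l₂ := by linarith
      positivity
    have hp2 : 0 < X^2 * (B⁻¹ + l₂*α^2) := by
      have : 0 < B⁻¹ + l₂*α^2 := by positivity
      positivity
    have hf00 : 0 < s11 := by
      have hd : (l₂*α*(X * X⁻¹))^2 < ((X⁻¹)^2 * (A + l₂)) * (X^2 * (B⁻¹ + l₂*α^2)) := by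
        have h := hdp
        rw [hs11, hs33, hs13] at h
        linarith only [h]
      rw [hs11]
      exact f00_pos _ _ _ hp1 hp2 hd
    exact AmG_psd _ _ _ _ _ _ hf00 hdp hsum hD0


end
end

section
/- Let r1, r2 ≥ 0, λ2 > 0 and α ∈ ℝ. Then the interval [(r1+r2)/2, (1/4)·( ln((λ2 + e^{2r1})/(1 + λ2 α² e^{2r1})) + ln((λ2 + e^{2r2})/(1 + λ2 α² e^{2r2})) )] is nonempty, i.e., (r1+r2)/2 ≤ (1/4)·Σ_{j=1}^{2} ln((λ2 + e^{2r_j})/(1 + λ2 α² e^{2r_j})), if and only if |α| ≤ e^{−(r1+r2)}. -/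
open Matrix Real ComplexOrder

noncomputable section

/-- the separability interval is nonempty iff |α| ≤ e^{-(r₁+r₂)}. -/
theorem separability_interval_nonempty_iff
    (r₁ r₂ l₂ α : ℝ) (hr₁ : 0 ≤ r₁) (hr₂ : 0 ≤ r₂) (hl₂ : 0 < l₂) :
    (r₁ + r₂) / 2 ≤ (1/4) *
        (Real.log ((l₂ + Real.exp (2*r₁)) / (1 + l₂ * α^2 * Real.exp (2*r₁)))
          + Real.log ((l₂ + Real.exp (2*r₂)) / (1 + l₂ * α^2 * Real.exp (2*r₂)))) ↔
      |α| ≤ Real.exp (-(r₁ + r₂)) := by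
  set a := Real.exp (2*r₁) with hadef
  set b := Real.exp (2*r₂) with hbdef
  have ha : 0 < a := Real.exp_pos _
  have hb : 0 < b := Real.exp_pos _
  have hd1 : 0 < 1 + l₂ * α^2 * a := by positivity
  have hd2 : 0 < 1 + l₂ * α^2 * b := by positivity
  have hn1 : 0 < l₂ + a := by positivity
  have hn2 : 0 < l₂ + b := by positivity
  have hla : Real.log a = 2*r₁ := Real.log_exp _
  have hlb : Real.log b = 2*r₂ := Real.log_exp _
  have he : Real.exp (-(r₁+r₂)) ^ 2 = 1/(a*b) := by
    rw [hadef, hbdef, ← Real.exp_add, eq_div_iff (by positivity), sq, ← Real.exp_add,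
        ← Real.exp_add]
    rw [show -(r₁+r₂) + -(r₁+r₂) + (2*r₁ + 2*r₂) = 0 by ring, Real.exp_zero]
  rw [Real.log_div (ne_of_gt hn1) (ne_of_gt hd1),
      Real.log_div (ne_of_gt hn2) (ne_of_gt hd2)]
  have step1 : ((r₁ + r₂)/2 ≤ (1/4) * ((Real.log (l₂+a) - Real.log (1 + l₂*α^2*a))
      + (Real.log (l₂+b) - Real.log (1 + l₂*α^2*b)))) ↔
      Real.log (a*b*(1 + l₂*α^2*a)*(1 + l₂*α^2*b)) ≤ Real.log ((l₂+a)*(l₂+b)) := by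
    rw [Real.log_mul (by positivity) (ne_of_gt hd2),
        Real.log_mul (by positivity) (ne_of_gt hd1),
        Real.log_mul (ne_of_gt ha) (ne_of_gt hb),
        Real.log_mul (ne_of_gt hn1) (ne_of_gt hn2)]
    constructor <;> intro h <;> linarith
  rw [step1, Real.log_le_log_iff (by positivity) (by positivity)]
  have key : (l₂+a)*(l₂+b) - a*b*(1 + l₂*α^2*a)*(1 + l₂*α^2*b)
      = l₂*(1 - a*b*α^2)*(a + b + l₂*(1 + a*b*α^2)) := by ring
  have ht : 0 ≤ a*b*α^2 := by positivity
  have hP : 0 < a + b + l₂*(1 + a*b*α^2) := by positivity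
  have step2 : (a*b*(1 + l₂*α^2*a)*(1 + l₂*α^2*b) ≤ (l₂+a)*(l₂+b)) ↔ a*b*α^2 ≤ 1 := by
    constructor
    · intro h
      nlinarith [mul_pos hl₂ hP]
    · intro h
      nlinarith [mul_pos hl₂ hP]
  rw [step2]
  constructor
  · intro h
    have h2 : α^2 ≤ Real.exp (-(r₁+r₂)) ^ 2 := by
      rw [he, le_div_iff₀ (mul_pos ha hb)]; nlinarith
    calc |α| = Real.sqrt (α^2) := (Real.sqrt_sq_eq_abs α).symm
      _ ≤ Real.sqrt (Real.exp (-(r₁+r₂))^2) := Real.sqrt_le_sqrt h2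
      _ = Real.exp (-(r₁+r₂)) := Real.sqrt_sq (le_of_lt (Real.exp_pos _))
  · intro h
    have h2 : α^2 ≤ Real.exp (-(r₁+r₂))^2 := by
      rw [← sq_abs]
      exact pow_le_pow_left₀ (abs_nonneg _) h 2
    rw [he, le_div_iff₀ (mul_pos ha hb)] at h2
    nlinarith


end
end

section
/- Let C_q = [[q1, q3],[q3, q2]] be a real symmetric positive definite 2×2 matrix with Δ = q1q2 − q3² > 0, and suppose q1 + q2 ≥ 1 + Δ. Let π_dcc be the de-cross-correlated pure state with x-block C_q and p-block C_q^{-1}. Then the squeezing of formation of π_dcc, namely half the sum of the logarithms of the two largest eigenvalues of π_dcc, equals ln( (q1 + q2 + √((q1+q2)² − 4Δ)) / (2√Δ) ). -/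
open Matrix Real ComplexOrder

noncomputable section

open Polynomial in
lemma charpoly_fin_two' (A : Matrix (Fin 2) (Fin 2) ℝ) :
    A.charpoly = X^2 - C (A 0 0 + A 1 1) * X + C (A 0 0 * A 1 1 - A 0 1 * A 1 0) := by
  rw [Matrix.charpoly, Matrix.det_fin_two, charmatrix_apply_eq, charmatrix_apply_eq,
    charmatrix_apply_ne _ _ _ (by decide), charmatrix_apply_ne _ _ _ (by decide)]
  simp only [_root_.map_add, _root_.map_mul, _root_.map_sub]
  ring

def interleave : Fin 4 ≃ (Fin 2 ⊕ Fin 2) where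
  toFun := ![.inl 0, .inr 0, .inl 1, .inr 1]
  invFun := Sum.elim ![0,2] ![1,3]
  left_inv := by decide
  right_inv := by decide

lemma dccGen_eq (Cq Cp : Matrix (Fin 2) (Fin 2) ℝ) :
    dccGen Cq Cp = (Matrix.fromBlocks Cq 0 0 Cp).submatrix interleave interleave := by
  ext i j
  fin_cases i <;> fin_cases j <;>
    simp [dccGen, interleave, Matrix.fromBlocks, Matrix.submatrix_apply]

lemma charpoly_dccGen (Cq Cp : Matrix (Fin 2) (Fin 2) ℝ) :
    (dccGen Cq Cp).charpoly = Cq.charpoly * Cp.charpoly := by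
  rw [dccGen_eq]
  have : (Matrix.fromBlocks Cq 0 0 Cp).submatrix interleave interleave
      = Matrix.reindex interleave.symm interleave.symm (Matrix.fromBlocks Cq 0 0 Cp) := rfl
  rw [this, Matrix.charpoly_reindex, Matrix.charpoly_fromBlocks_zero₁₂]

lemma sort_eq_of_sorted (s : Multiset ℝ) (L : List ℝ) (h : (L : Multiset ℝ) = s)
    (hs : L.Pairwise (· ≤ ·)) : s.sort (· ≤ ·) = L :=
  List.Perm.eq_of_pairwise' (Multiset.pairwise_sort s _) hs
    (by rw [← Multiset.coe_eq_coe, Multiset.sort_eq, h])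


/-- the squeezing of formation of the de-cross-correlated pure
state equals ln((q₁+q₂+√((q₁+q₂)²−4Δ))/(2√Δ)). -/
theorem sof_dcc_pure (q1 q2 q3 : ℝ)
    (hpd : (!![q1, q3; q3, q2] : Matrix (Fin 2) (Fin 2) ℝ).PosDef)
    (hΔ : 0 < q1 * q2 - q3^2)
    (hsum : 1 + (q1 * q2 - q3^2) ≤ q1 + q2) :
    SOFpure (dccM !![q1, q3; q3, q2]) =
      Real.log ((q1 + q2 + Real.sqrt ((q1 + q2)^2 - 4 * (q1 * q2 - q3^2)))
        / (2 * Real.sqrt (q1 * q2 - q3^2))) := by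
  classical
  set Δ : ℝ := q1 * q2 - q3^2 with hΔdef
  set t : ℝ := q1 + q2 with htdef
  have ht : 1 < t := by nlinarith
  have hdisc : 0 ≤ t^2 - 4*Δ := by nlinarith [sq_nonneg (Δ - 1)]
  set D : ℝ := Real.sqrt (t^2 - 4*Δ) with hDdef
  have hD0 : 0 ≤ D := Real.sqrt_nonneg _
  have hD2 : D^2 = t^2 - 4*Δ := Real.sq_sqrt hdisc
  set a : ℝ := (t - D)/2 with hadef
  set b : ℝ := (t + D)/2 with hbdef
  have ha : 0 < a := by
    have : D < t := by nlinarith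
    simp only [hadef]; linarith
  have hba : a ≤ b := by simp only [hadef, hbdef]; linarith
  have hb : 0 < b := lt_of_lt_of_le ha hba
  have hab : a * b = Δ := by
    simp only [hadef, hbdef]; linear_combination (-1/4 : ℝ) * hD2
  have hsum' : a + b = t := by simp only [hadef, hbdef]; ring
  have hfac : (1 - a) * (1 - b) ≤ 0 := by nlinarith
  have hb1 : 1 ≤ b := by nlinarith
  have ha1 : a ≤ 1 := by nlinarith
  have hbinv : b⁻¹ ≤ 1 := by
    rw [inv_le_one_iff₀]; right; exact hb1
  have hainv : 1 ≤ a⁻¹ := one_le_inv_iff₀.2 ⟨ha, ha1⟩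
  have hΔ0 : Δ ≠ 0 := ne_of_gt hΔ
  -- the characteristic polynomial and its roots
  have hroots : (dccM !![q1, q3; q3, q2]).charpoly.roots = (↑[a, b, b⁻¹, a⁻¹] : Multiset ℝ) := by
    have hdet : (!![q1, q3; q3, q2] : Matrix (Fin 2) (Fin 2) ℝ).det = Δ := by
      rw [Matrix.det_fin_two_of]; ring
    have hinv : (!![q1, q3; q3, q2] : Matrix (Fin 2) (Fin 2) ℝ)⁻¹
        = Δ⁻¹ • !![q2, -q3; -q3, q1] := by
      rw [Matrix.inv_def, hdet, Matrix.adjugate_fin_two_of, Ring.inverse_eq_inv]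
    have hcq : (!![q1, q3; q3, q2] : Matrix (Fin 2) (Fin 2) ℝ).charpoly
        = (Polynomial.X - Polynomial.C a) * (Polynomial.X - Polynomial.C b) := by
      rw [charpoly_fin_two']
      rw [show (!![q1, q3; q3, q2] : Matrix (Fin 2) (Fin 2) ℝ) 0 0 = q1 from rfl,
        show (!![q1, q3; q3, q2] : Matrix (Fin 2) (Fin 2) ℝ) 1 1 = q2 from rfl,
        show (!![q1, q3; q3, q2] : Matrix (Fin 2) (Fin 2) ℝ) 0 1 = q3 from rfl,
        show (!![q1, q3; q3, q2] : Matrix (Fin 2) (Fin 2) ℝ) 1 0 = q3 from rfl]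
      rw [show q1 + q2 = a + b from hsum'.symm,
        show q1 * q2 - q3 * q3 = a * b by rw [hab]; ring]
      simp only [_root_.map_add, _root_.map_mul]; ring
    have hcqi : ((!![q1, q3; q3, q2] : Matrix (Fin 2) (Fin 2) ℝ)⁻¹).charpoly
        = (Polynomial.X - Polynomial.C b⁻¹) * (Polynomial.X - Polynomial.C a⁻¹) := by
      rw [hinv, charpoly_fin_two']
      rw [show (Δ⁻¹ • !![q2, -q3; -q3, q1]) 0 0 = Δ⁻¹ * q2 from rfl,
        show (Δ⁻¹ • !![q2, -q3; -q3, q1]) 1 1 = Δ⁻¹ * q1 from rfl,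
        show (Δ⁻¹ • !![q2, -q3; -q3, q1]) 0 1 = Δ⁻¹ * (-q3) from rfl,
        show (Δ⁻¹ • !![q2, -q3; -q3, q1]) 1 0 = Δ⁻¹ * (-q3) from rfl]
      have hΔinv : Δ⁻¹ = a⁻¹ * b⁻¹ := by rw [← hab, mul_inv]
      have h1 : a * a⁻¹ = 1 := mul_inv_cancel₀ ha.ne'
      have h2 : b * b⁻¹ = 1 := mul_inv_cancel₀ hb.ne'
      have hEΔ : Δ * Δ⁻¹ = 1 := mul_inv_cancel₀ hΔ0
      have htq : q1 + q2 = a + b := by rw [hsum', htdef]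
      have e1 : Δ⁻¹ * q2 + Δ⁻¹ * q1 = b⁻¹ + a⁻¹ := by
        linear_combination (q1 + q2) * hΔinv + a⁻¹ * b⁻¹ * htq + b⁻¹ * h1 + a⁻¹ * h2
      have e2 : Δ⁻¹ * q2 * (Δ⁻¹ * q1) - Δ⁻¹ * (-q3) * (Δ⁻¹ * (-q3)) = b⁻¹ * a⁻¹ := by
        linear_combination Δ⁻¹^2 * hΔdef.symm + Δ⁻¹ * hEΔ + hΔinv
      rw [e1, e2]
      simp only [_root_.map_add, _root_.map_mul]; ring
    rw [show dccM !![q1, q3; q3, q2]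
          = dccGen !![q1, q3; q3, q2] (!![q1, q3; q3, q2])⁻¹ from rfl,
      charpoly_dccGen, hcq, hcqi,
      show (Polynomial.X - Polynomial.C a) * (Polynomial.X - Polynomial.C b)
          * ((Polynomial.X - Polynomial.C b⁻¹) * (Polynomial.X - Polynomial.C a⁻¹))
        = (((↑[a, b, b⁻¹, a⁻¹] : Multiset ℝ)).map
            (fun r => Polynomial.X - Polynomial.C r)).prod by
        simp only [Multiset.map_coe, Multiset.prod_coe, List.map_cons, List.map_nil,
          List.prod_cons, List.prod_nil, mul_one]
        ring,
      Polynomial.roots_multiset_prod_X_sub_C]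
  -- determine the two largest eigenvalues
  have key : Real.log (eig 2 (dccM !![q1, q3; q3, q2]))
      + Real.log (eig 3 (dccM !![q1, q3; q3, q2])) = Real.log b + Real.log a⁻¹ := by
    rcases le_total Δ 1 with hc | hc
    · have h1 : a ≤ b⁻¹ := by
        rw [inv_eq_one_div, le_div_iff₀ hb, hab]; exact hc
      have h2 : b ≤ a⁻¹ := by
        rw [inv_eq_one_div, le_div_iff₀ ha, mul_comm, hab]; exact hc
      have hsorted : List.Pairwise (· ≤ ·) [a, b⁻¹, b, a⁻¹] := by
        rw [List.pairwise_cons, List.pairwise_cons, List.pairwise_cons]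
        refine ⟨?_, ?_, ?_, List.pairwise_singleton _ _⟩ <;>
          (intro x hx;
           simp only [List.mem_cons, List.not_mem_nil, or_false] at hx) <;>
          (rcases hx with rfl | hx; · linarith) <;>
          first
            | linarith
            | (rcases hx with rfl | hx; · linarith) <;> (rcases hx with rfl; linarith)
      have hperm : List.Perm ([a, b⁻¹, b, a⁻¹] : List ℝ) [a, b, b⁻¹, a⁻¹] :=
        (List.Perm.swap b b⁻¹ [a⁻¹]).cons a
      have hL : sortedEigs (dccM !![q1, q3; q3, q2]) = [a, b⁻¹, b, a⁻¹] := by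
        rw [sortedEigs, hroots]
        exact sort_eq_of_sorted _ _ (Multiset.coe_eq_coe.2 hperm) hsorted
      simp [eig, hL]
    · have h1 : b⁻¹ ≤ a := by
        rw [inv_eq_one_div, div_le_iff₀ hb, hab]; exact hc
      have h2 : a⁻¹ ≤ b := by
        rw [inv_eq_one_div, div_le_iff₀ ha, mul_comm, hab]; exact hc
      have hsorted : List.Pairwise (· ≤ ·) [b⁻¹, a, a⁻¹, b] := by
        rw [List.pairwise_cons, List.pairwise_cons, List.pairwise_cons]
        refine ⟨?_, ?_, ?_, List.pairwise_singleton _ _⟩ <;>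
          (intro x hx;
           simp only [List.mem_cons, List.not_mem_nil, or_false] at hx) <;>
          (rcases hx with rfl | hx; · linarith) <;>
          first
            | linarith
            | (rcases hx with rfl | hx; · linarith) <;> (rcases hx with rfl; linarith)
      have hperm : List.Perm ([b⁻¹, a, a⁻¹, b] : List ℝ) [a, b, b⁻¹, a⁻¹] :=
        (List.Perm.swap a b⁻¹ [a⁻¹, b]).trans
          ((((List.Perm.swap b a⁻¹ []).cons b⁻¹).cons a).trans
            ((List.Perm.swap b b⁻¹ [a⁻¹]).cons a))
      have hL : sortedEigs (dccM !![q1, q3; q3, q2]) = [b⁻¹, a, a⁻¹, b] := by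
        rw [sortedEigs, hroots]
        exact sort_eq_of_sorted _ _ (Multiset.coe_eq_coe.2 hperm) hsorted
      simp [eig, hL]
      ring
  rw [SOFpure, key]
  have hrhs : (t + D) / (2 * Real.sqrt Δ) = b / Real.sqrt Δ := by
    rw [hbdef, div_div]
  rw [hrhs, Real.log_div hb.ne' (Real.sqrt_ne_zero'.2 hΔ),
    Real.log_sqrt hΔ.le, ← hab, Real.log_mul ha.ne' hb.ne', Real.log_inv]
  ring


end
end

section
/- Let C_q = [[q1, q3],[q3, q2]] be a real symmetric positive definite 2×2 matrix with Δ = q1q2 − q3² > 0, let m = q1q2/Δ, and let π_dcc be the de-cross-correlated pure state with x-block C_q and p-block C_q^{-1}. Then the smallest symplectic eigenvalue of the partial transpose of π_dcc equals √m − √(m − 1), i.e., ν1↑(Λ π_dcc Λ) = √m − √(m−1). -/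
open Matrix Real ComplexOrder

noncomputable section

open Polynomial in
set_option maxHeartbeats 1000000 in
private lemma my_det_fin_four {R : Type*} [CommRing R] (M : Matrix (Fin 4) (Fin 4) R) :
    M.det =
      M 0 0 * (M 1 1 * (M 2 2 * M 3 3 - M 2 3 * M 3 2) - M 1 2 * (M 2 1 * M 3 3 - M 2 3 * M 3 1) + M 1 3 * (M 2 1 * M 3 2 - M 2 2 * M 3 1))
    - M 0 1 * (M 1 0 * (M 2 2 * M 3 3 - M 2 3 * M 3 2) - M 1 2 * (M 2 0 * M 3 3 - M 2 3 * M 3 0) + M 1 3 * (M 2 0 * M 3 2 - M 2 2 * M 3 0))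
    + M 0 2 * (M 1 0 * (M 2 1 * M 3 3 - M 2 3 * M 3 1) - M 1 1 * (M 2 0 * M 3 3 - M 2 3 * M 3 0) + M 1 3 * (M 2 0 * M 3 1 - M 2 1 * M 3 0))
    - M 0 3 * (M 1 0 * (M 2 1 * M 3 2 - M 2 2 * M 3 1) - M 1 1 * (M 2 0 * M 3 2 - M 2 2 * M 3 0) + M 1 2 * (M 2 0 * M 3 1 - M 2 1 * M 3 0)) := by
  simp [Matrix.det_succ_row_zero, Fin.sum_univ_succ, Fin.succAbove, Matrix.submatrix, show (Fin.succ 2 : Fin 4) = 3 from rfl, show (Fin.castSucc 2 : Fin 4) = 2 from rfl, show ((if (1:Fin 4) < 3 then 1 else 2 : Fin 4)) = 1 from rfl]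
  ring

open Polynomial in
private lemma charpoly_sparse (a b c d e f g h : ℂ) :
    (!![0,a,0,b; c,0,d,0; 0,e,0,f; g,0,h,0] : Matrix (Fin 4) (Fin 4) ℂ).charpoly =
    X^4 - C (a*c + b*g + d*e + f*h) * X^2
      + C ((a*c)*(f*h) + (b*g)*(d*e) - a*d*f*g - b*c*e*h) := by
  rw [Matrix.charpoly, my_det_fin_four]
  simp [Matrix.charmatrix_apply, Matrix.diagonal]
  ring

open Polynomial in
private lemma roots_sparse (a b c d e f g h u v : ℂ)
    (e1 : u^2 + v^2 = a*c + b*g + d*e + f*h)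
    (e2 : u^2 * v^2 = (a*c)*(f*h) + (b*g)*(d*e) - a*d*f*g - b*c*e*h) :
    (!![0,a,0,b; c,0,d,0; 0,e,0,f; g,0,h,0] : Matrix (Fin 4) (Fin 4) ℂ).charpoly.roots
      = {u, -u, v, -v} := by
  have hfactor : ((X:ℂ[X]) - C u) * (X - C (-u)) * ((X - C v) * (X - C (-v)))
      = X^4 - C (u^2 + v^2) * X^2 + C (u^2 * v^2) := by
    simp only [Polynomial.C_add, Polynomial.C_mul, Polynomial.C_neg, Polynomial.C_pow]
    ring
  have hne : ∀ w : ℂ, (X:ℂ[X]) - C w ≠ 0 := fun w => X_sub_C_ne_zero w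
  rw [charpoly_sparse, ← e1, ← e2, ← hfactor,
    Polynomial.roots_mul (mul_ne_zero (mul_ne_zero (hne _) (hne _)) (mul_ne_zero (hne _) (hne _))),
    Polynomial.roots_mul (mul_ne_zero (hne _) (hne _)),
    Polynomial.roots_mul (mul_ne_zero (hne _) (hne _)),
    Polynomial.roots_X_sub_C, Polynomial.roots_X_sub_C, Polynomial.roots_X_sub_C, Polynomial.roots_X_sub_C]
  rfl

set_option maxHeartbeats 2000000 in

/-- the smallest symplectic eigenvalue of the partial transpose
of the de-cross-correlated pure state is √m − √(m−1) with m = q₁q₂/Δ. -/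
theorem nu1_ptrans_dcc_pure (q1 q2 q3 : ℝ)
    (hpd : (!![q1, q3; q3, q2] : Matrix (Fin 2) (Fin 2) ℝ).PosDef)
    (hΔ : 0 < q1 * q2 - q3^2) :
    nu1 (ptrans (dccM !![q1, q3; q3, q2])) =
      Real.sqrt (q1 * q2 / (q1 * q2 - q3^2))
        - Real.sqrt (q1 * q2 / (q1 * q2 - q3^2) - 1) := by
  have hq12 : (0:ℝ) < q1 * q2 := lt_of_le_of_lt (sq_nonneg q3) (by linarith)
  set D : ℝ := q1 * q2 - q3^2 with hD
  have hDne : D ≠ 0 := ne_of_gt hΔ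
  set s : ℝ := Real.sqrt (q1 * q2) with hs
  set t : ℝ := |q3| with ht
  set d : ℝ := Real.sqrt D with hd
  have hs2 : s^2 = q1 * q2 := Real.sq_sqrt hq12.le
  have ht2 : t^2 = q3^2 := sq_abs q3
  have hd2 : d^2 = D := Real.sq_sqrt hΔ.le
  have hdpos : 0 < d := Real.sqrt_pos.mpr hΔ
  have hspos : 0 < s := Real.sqrt_pos.mpr hq12
  have htnn : 0 ≤ t := abs_nonneg q3
  have hts : t < s := by
    nlinarith [sq_nonneg (s - t), sq_nonneg (s + t)]
  set a : ℝ := (s - t) / d with ha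
  set b : ℝ := (s + t) / d with hb
  have hab : a ≤ b := (div_le_div_iff_of_pos_right hdpos).mpr (by linarith)
  have hapos : 0 < a := div_pos (by linarith) hdpos
  -- Step A: the partial transpose explicitly
  have hT : ptrans (dccM !![q1, q3; q3, q2]) =
      !![q1,0,q3,0; 0,q2/D,0,q3/D; q3,0,q2,0; 0,q3/D,0,q1/D] := by
    have hdet : (!![q1, q3; q3, q2] : Matrix (Fin 2) (Fin 2) ℝ).det = D := by
      simp [Matrix.det_fin_two, hD]; ring
    have hinv : (!![q1, q3; q3, q2] : Matrix (Fin 2) (Fin 2) ℝ)⁻¹ =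
        D⁻¹ • !![q2, -q3; -q3, q1] := by
      rw [Matrix.inv_def, hdet, Matrix.adjugate_fin_two, Ring.inverse_eq_inv]
      norm_num
    ext i j
    fin_cases i <;> fin_cases j <;>
      simp [ptrans, dccM, dccGen, Lam, hinv, Matrix.mul_apply, Fin.sum_univ_four,
        Matrix.diagonal, div_eq_inv_mul]
  -- Step B: the matrix iΩσᴳ explicitly
  have hM : Complex.I • (cplx Omega4 * cplx (ptrans (dccM !![q1, q3; q3, q2]))) =
      !![0, Complex.I * (q2/D : ℝ), 0, Complex.I * (q3/D : ℝ);
         -(Complex.I * (q1:ℝ)), 0, -(Complex.I * (q3:ℝ)), 0;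
         0, Complex.I * (q3/D : ℝ), 0, Complex.I * (q1/D : ℝ);
         -(Complex.I * (q3:ℝ)), 0, -(Complex.I * (q2:ℝ)), 0] := by
    rw [hT]
    ext i j
    fin_cases i <;> fin_cases j <;>
      simp [cplx, Omega4, Matrix.mul_apply, Fin.sum_univ_four] <;> ring
  -- Step C: charpoly
  have hI1 : ∀ x y : ℂ, (Complex.I * x) * (-(Complex.I * y)) = x * y := by
    intro x y; linear_combination (-(x*y)) * Complex.I_sq
  have hI2 : ∀ x y : ℂ, (-(Complex.I * x)) * (Complex.I * y) = x * y := by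
    intro x y; linear_combination (-(x*y)) * Complex.I_sq
  have hrA : a^2 + b^2 = q2/D*q1 + q3/D*q3 + q3*(q3/D) + q1/D*q2 := by
    have h0 : a^2 + b^2 = (2*(q1*q2) + 2*q3^2)/D := by
      rw [ha, hb, div_pow, div_pow, hd2, ← add_div]
      congr 1
      linear_combination 2*hs2 + 2*ht2
    rw [h0]; field_simp; ring
  have hrB : a^2 * b^2 = (q2/D*q1)*(q1/D*q2) + (q3/D*q3)*(q3*(q3/D))
      - (q2/D*q3)*(q1/D*q3) - (q3/D*q1)*(q3/D*q2) := by
    have h1 : a^2 * b^2 = 1 := by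
      rw [ha, hb, div_pow, div_pow, hd2, div_mul_div_comm]
      rw [show (s-t)^2*(s+t)^2 = D*D from by
        linear_combination (s^2 - t^2 + q1*q2 - q3^2)*hs2
          - (s^2 - t^2 + q1*q2 - q3^2)*ht2 - (q1*q2 - q3^2 + D)*hD]
      exact div_self (mul_ne_zero hDne hDne)
    have h2 : (q2/D*q1)*(q1/D*q2) + (q3/D*q3)*(q3*(q3/D))
        - (q2/D*q3)*(q1/D*q3) - (q3/D*q1)*(q3/D*q2) = 1 := by
      field_simp
      rw [hD]
      ring
    rw [h1, h2]
  have e1 : ((a:ℝ):ℂ)^2 + ((b:ℝ):ℂ)^2 =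
      (Complex.I * ((q2/D:ℝ):ℂ)) * (-(Complex.I * ((q1:ℝ):ℂ)))
        + (Complex.I * ((q3/D:ℝ):ℂ)) * (-(Complex.I * ((q3:ℝ):ℂ)))
        + (-(Complex.I * ((q3:ℝ):ℂ))) * (Complex.I * ((q3/D:ℝ):ℂ))
        + (Complex.I * ((q1/D:ℝ):ℂ)) * (-(Complex.I * ((q2:ℝ):ℂ))) := by
    rw [hI1, hI1, hI2, hI1]
    exact_mod_cast congrArg Complex.ofReal hrA
  have e2 : ((a:ℝ):ℂ)^2 * ((b:ℝ):ℂ)^2 =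
      ((Complex.I * ((q2/D:ℝ):ℂ)) * (-(Complex.I * ((q1:ℝ):ℂ))))
          * ((Complex.I * ((q1/D:ℝ):ℂ)) * (-(Complex.I * ((q2:ℝ):ℂ))))
        + ((Complex.I * ((q3/D:ℝ):ℂ)) * (-(Complex.I * ((q3:ℝ):ℂ))))
          * ((-(Complex.I * ((q3:ℝ):ℂ))) * (Complex.I * ((q3/D:ℝ):ℂ)))
        - (Complex.I * ((q2/D:ℝ):ℂ)) * (-(Complex.I * ((q3:ℝ):ℂ)))
          * (Complex.I * ((q1/D:ℝ):ℂ)) * (-(Complex.I * ((q3:ℝ):ℂ)))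
        - (Complex.I * ((q3/D:ℝ):ℂ)) * (-(Complex.I * ((q1:ℝ):ℂ)))
          * (Complex.I * ((q3/D:ℝ):ℂ)) * (-(Complex.I * ((q2:ℝ):ℂ))) := by
    have hI3 : ∀ c x y : ℂ, c * (Complex.I * x) * (-(Complex.I * y)) = c * (x * y) := by
      intro c x y; linear_combination (-(c*x*y)) * Complex.I_sq
    rw [hI1, hI1, hI1, hI2, hI1, hI3, hI1, hI3]
    exact_mod_cast congrArg Complex.ofReal hrB
  have hroots : (Complex.I • (cplx Omega4 * cplx (ptrans (dccM !![q1, q3; q3, q2])))).charpoly.roots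
      = {((a:ℝ):ℂ), -((a:ℝ):ℂ), ((b:ℝ):ℂ), -((b:ℝ):ℂ)} := by
    rw [hM]
    exact roots_sparse _ _ _ _ _ _ _ _ _ _ e1 e2
  -- Step E: symplectic eigenvalues
  have hse : sympEigs (ptrans (dccM !![q1, q3; q3, q2])) = {a, a, b, b} := by
    rw [sympEigs, hroots]
    have haa : ‖((a:ℝ):ℂ)‖ = a := by rw [Complex.norm_real, Real.norm_eq_abs, abs_of_pos hapos]
    have hbb : ‖((b:ℝ):ℂ)‖ = b := by
      rw [Complex.norm_real, Real.norm_eq_abs, abs_of_pos (lt_of_lt_of_le hapos hab)]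
    simp [Multiset.insert_eq_cons, haa, hbb, map_neg, abs_of_pos hapos, abs_of_pos (lt_of_lt_of_le hapos hab)]
  -- Step F: sorting
  have hsort : Multiset.sort ({a, a, b, b} : Multiset ℝ) (· ≤ ·) = [a, a, b, b] := by
    apply List.Perm.eq_of_pairwise' (Multiset.pairwise_sort _ _) ?_ (Multiset.coe_eq_coe.mp ?_)
    · simp [List.pairwise_cons, hab]
    · rw [Multiset.sort_eq]; rfl
  have hnu : nu1 (ptrans (dccM !![q1, q3; q3, q2])) = a := by
    rw [nu1, hse, hsort]; rfl
  -- Step G: final arithmetic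
  rw [hnu]
  have h1 : Real.sqrt (q1 * q2 / D) = s / d := Real.sqrt_div hq12.le D
  have h2 : q1 * q2 / D - 1 = q3^2 / D := by field_simp [hD]; linarith
  have h3 : Real.sqrt (q3^2 / D) = t / d := by
    rw [Real.sqrt_div (sq_nonneg q3) D, Real.sqrt_sq_eq_abs]
  rw [h1, h2, h3, ha]
  ring


end
end

section
/- The auxiliary function h_0 is strictly increasing on [0, ∞): for all real x, y with 0 ≤ x < y, one has h_0[x] < h_0[y]. Equivalently, h is strictly decreasing on (0,1]. -/
open Matrix Real ComplexOrder

noncomputable section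

lemma Fstrict : StrictMonoOn
    (fun u : ℝ => u * Real.log u - (u - 1) * Real.log (u - 1)) (Set.Ici 1) := by
  apply strictMonoOn_of_deriv_pos (convex_Ici 1)
  · exact (Real.continuous_mul_log.continuousOn).sub
      ((Real.continuous_mul_log.comp (continuous_id.sub continuous_const)).continuousOn)
  · intro u hu
    rw [interior_Ici] at hu
    have h1 : (1:ℝ) < u := hu
    have hd1 : HasDerivAt (fun u : ℝ => u * Real.log u) (Real.log u + 1) u :=
      Real.hasDerivAt_mul_log (by linarith)
    have hd2 : HasDerivAt (fun u : ℝ => (u - 1) * Real.log (u - 1))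
        ((Real.log (u - 1) + 1) * 1) u :=
      by have := (Real.hasDerivAt_mul_log (x := u - 1) (by simp only [ne_eq]; intro h; linarith)).comp u
              ((hasDerivAt_id u).sub_const 1)
         exact this
    have hderiv : deriv (fun u : ℝ => u * Real.log u - (u - 1) * Real.log (u - 1)) u
        = (Real.log u + 1) - (Real.log (u - 1) + 1) * 1 := (hd1.sub hd2).deriv
    rw [hderiv]
    have := Real.log_lt_log (show (0:ℝ) < u - 1 by linarith) (show u - 1 < u by linarith)
    linarith

lemma hAux_eq_F (x : ℝ) (hx : 0 < x) :
    hAux x = (fun u : ℝ => u * Real.log u - (u - 1) * Real.log (u - 1))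
      ((1 + x)^2 / (4 * x)) := by
  have h2 : (1 - x)^2 / (4 * x) = (1 + x)^2 / (4 * x) - 1 := by
    field_simp; ring
  simp only [hAux, h2]

lemma g_mem (x : ℝ) (hx : 0 < x) : (1 + x)^2 / (4 * x) ∈ Set.Ici (1:ℝ) := by
  rw [Set.mem_Ici, le_div_iff₀ (by linarith)]
  nlinarith [sq_nonneg (1 - x)]

lemma hAux_anti : ∀ a b : ℝ, 0 < a → a < b → b ≤ 1 → hAux b < hAux a := by
  intro a b ha hab hb1
  have hb : 0 < b := lt_trans ha hab
  rw [hAux_eq_F a ha, hAux_eq_F b hb]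
  apply Fstrict (g_mem b hb) (g_mem a ha)
  rw [div_lt_div_iff₀ (by linarith) (by linarith)]
  have h1ab : a * b < 1 := by nlinarith
  nlinarith [mul_pos (sub_pos.mpr hab) (sub_pos.mpr h1ab)]

/-- h₀ is strictly increasing on [0, ∞); equivalently, h is
strictly decreasing on (0, 1]. -/
theorem h0_strictMono :
    (∀ x y : ℝ, 0 ≤ x → x < y → h0Aux x < h0Aux y) ∧
    (∀ a b : ℝ, 0 < a → a < b → b ≤ 1 → hAux b < hAux a) := by
  refine ⟨fun x y hx hxy => ?_, hAux_anti⟩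
  exact hAux_anti _ _ (Real.exp_pos _) (Real.exp_lt_exp.mpr (by linarith))
    (Real.exp_le_one_iff.mpr (by linarith))

end
end
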